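/- Let ⋆ be the unique binary operation on {1,...,N} satisfying p ⋆ 1 = p + 1 mod N and p ⋆ (q ⋆ 1) = (p ⋆ q) ⋆ (p ⋆ 1). Then for all p < N and all q, one has p < p ⋆ q ≤ N. -/
import Mathlib


def LaverAxioms (N : ℕ) (star : ℕ → ℕ → ℕ) : Prop :=
  (∀ p q, p ∈ Set.Icc 1 N → q ∈ Set.Icc 1 N → star p q ∈ Set.Icc 1 N) ∧
  (∀ p ∈ Set.Icc 1 N, star p 1 = p % N + 1) ∧
  (∀ p q, p ∈ Set.Icc 1 N → q ∈ Set.Icc 1 N →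
    star p (star q 1) = star (star p q) (star p 1))

lemma laver_starN (N : ℕ) (hN : 0 < N) (star : ℕ → ℕ → ℕ)
    (h : LaverAxioms N star) : ∀ q, 1 ≤ q → q ≤ N → star N q = q := by
  obtain ⟨hcl, h1, h2⟩ := h
  have hNm : (N : ℕ) ∈ Set.Icc 1 N := by simp [Set.mem_Icc]; omega
  have hN1 : star N 1 = 1 := by
    have := h1 N hNm; simpa [Nat.mod_self] using this
  intro q
  induction q with
  | zero => omega
  | succ q ih =>
    intro _ hqN
    rcases Nat.eq_zero_or_pos q with hq0 | hq1
    · subst hq0; exact hN1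
    · have hqm : q ∈ Set.Icc 1 N := by simp [Set.mem_Icc]; omega
      have hq1' : star q 1 = q + 1 := by
        have := h1 q hqm; rwa [Nat.mod_eq_of_lt (by omega)] at this
      have := h2 N q hNm hqm
      rw [hq1', hN1, ih hq1 (by omega)] at this
      rw [this, hq1']

theorem laver_strict_bounds (N : ℕ) (hN : 0 < N) (star : ℕ → ℕ → ℕ)
    (h : LaverAxioms N star) :
    ∀ p q, 1 ≤ p → p < N → q ∈ Set.Icc 1 N → p < star p q ∧ star p q ≤ N := by
  have hNfix := laver_starN N hN star h
  obtain ⟨hcl, h1, h2⟩ := h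
  have key : ∀ k p, N - p ≤ k → 1 ≤ p → p < N → ∀ q, 1 ≤ q → q ≤ N → p < star p q := by
    intro k
    induction k with
    | zero => intro p hk; omega
    | succ k ih =>
      intro p hk hp1 hpN
      have hpm : p ∈ Set.Icc 1 N := by simp [Set.mem_Icc]; omega
      have hp1' : star p 1 = p + 1 := by
        have := h1 p hpm; rwa [Nat.mod_eq_of_lt (by omega)] at this
      intro q
      induction q with
      | zero => omega
      | succ q ihq =>
        intro _ hqN
        rcases Nat.eq_zero_or_pos q with hq0 | hqpos
        · subst hq0; simp [hp1']
        · have hqm : q ∈ Set.Icc 1 N := by simp [Set.mem_Icc]; omega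
          have hq1' : star q 1 = q + 1 := by
            have := h1 q hqm; rwa [Nat.mod_eq_of_lt (by omega)] at this
          have hstep := h2 p q hpm hqm
          rw [hq1', hp1'] at hstep
          -- star p (q+1) = star (star p q) (p+1)
          set r := star p q with hr
          have hpr : p < r := ihq hqpos (by omega)
          have hrm : r ∈ Set.Icc 1 N := hcl p q hpm hqm
          have hrN : r ≤ N := (Set.mem_Icc.mp hrm).2
          rcases eq_or_lt_of_le hrN with hrEq | hrLt
          · rw [hstep, hrEq, hNfix (p+1) (by omega) (by omega)]; omega
          · have := ih r (by omega) (by omega) hrLt (p+1) (by omega) (by omega)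
            rw [hstep]; omega
  intro p q hp1 hpN hq
  rw [Set.mem_Icc] at hq
  refine ⟨key (N - p) p le_rfl hp1 hpN q hq.1 hq.2, ?_⟩
  exact (Set.mem_Icc.mp (hcl p q (by simp [Set.mem_Icc]; omega) (by simp [Set.mem_Icc]; omega))).2
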